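/- Let μ be a stable matching and μ' a 1-envy-free matching in a many-to-one market with strict responsive preferences, with corresponding one-to-one matchings μ̄ and μ̄' in the related market. If for some college j and some position c of j we have μ̄_M(c) ≻_j μ̄'_M(c), then μ̄_M(c') ⪰_j μ̄'_M(c') for every position c' of college j. -/

import Mathlib

attribute [local instance] Classical.propDecidable

noncomputable section

/-- A many-to-one college admissions market (college admissions model) with `n`
students and `m` colleges.  Strict preferences are encoded by injective rank
functions (a smaller rank means more preferred); `none` is the outside option
`0` (being unmatched / an unfilled position). -/
structure Market (n m : ℕ) where
  quota : Fin m → ℕ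
  sRank : Fin n → Option (Fin m) → ℕ
  sRank_inj : ∀ i, Function.Injective (sRank i)
  cRank : Fin m → Option (Fin n) → ℕ
  cRank_inj : ∀ j, Function.Injective (cRank j)

namespace Market

variable {n m : ℕ}

/-- Student `i` strictly prefers `a` to `b`. -/
def sPref (M : Market n m) (i : Fin n) (a b : Option (Fin m)) : Prop :=
  M.sRank i a < M.sRank i b

/-- College `j` strictly prefers `a` to `b`. -/
def cPref (M : Market n m) (j : Fin m) (a b : Option (Fin n)) : Prop :=
  M.cRank j a < M.cRank j b

/-- The set `μ⁻¹(j)` of students matched to college `j` under `μ`. -/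
def assigned (M : Market n m) (μ : Fin n → Option (Fin m)) (j : Fin m) : Finset (Fin n) :=
  Finset.univ.filter fun i => μ i = some j

/-- `μ` is a (capacity-feasible) matching: `|μ⁻¹(j)| ≤ q_j` for every college. -/
def IsMatching (M : Market n m) (μ : Fin n → Option (Fin m)) : Prop :=
  ∀ j, (M.assigned μ j).card ≤ M.quota j

/-- Individual rationality of `μ`. -/
def IndRational (M : Market n m) (μ : Fin n → Option (Fin m)) : Prop :=
  (∀ i, ¬ M.sPref i none (μ i)) ∧
  (∀ j i', μ i' = some j → ¬ M.cPref j none (some i'))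

/-- `(i, j)` is a blocking pair for `μ`. -/
def Blocks (M : Market n m) (μ : Fin n → Option (Fin m)) (i : Fin n) (j : Fin m) : Prop :=
  M.sPref i (some j) (μ i) ∧
  (((M.assigned μ j).card < M.quota j ∧ M.cPref j (some i) none) ∨
   ((M.assigned μ j).card = M.quota j ∧ ∃ i' ∈ M.assigned μ j, M.cPref j (some i) (some i')))

/-- `μ` is stable: individually rational with no blocking pair. -/
def Stable (M : Market n m) (μ : Fin n → Option (Fin m)) : Prop :=
  M.IndRational μ ∧ ∀ i j, ¬ M.Blocks μ i j

/-- `μ` is envy-free: individually rational and any blocking pair involves an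
unmatched student. -/
def EnvyFree (M : Market n m) (μ : Fin n → Option (Fin m)) : Prop :=
  M.IndRational μ ∧ ∀ i j, M.Blocks μ i j → μ i = none

/-- `μ` is 1-envy-free: envy-free, and either stable or there is one and only
one student who belongs to every blocking pair. -/
def OneEnvyFree (M : Market n m) (μ : Fin n → Option (Fin m)) : Prop :=
  M.EnvyFree μ ∧ (M.Stable μ ∨ ∃! i : Fin n, ∀ i' j, M.Blocks μ i' j → i' = i)

/-- `(i, j)` is a student-maximal blocking pair: `j` is `i`'s most preferred
college among those with whom `i` forms a blocking pair. -/
def StudentMaxBlock (M : Market n m) (μ : Fin n → Option (Fin m)) (i : Fin n) (j : Fin m) :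
    Prop :=
  M.Blocks μ i j ∧ ∀ j', M.Blocks μ i j' → M.sRank i (some j) ≤ M.sRank i (some j')

/-- `T` is the re-stabilization operator: on a 1-envy-free matching with no
blocking pair it is the identity; otherwise it satisfies the unique
student-maximal blocking pair `(i, j)`, matching `i` to `j`, keeping everyone
not matched to `j` unchanged, keeping the students of `j` if `j` has a vacancy
or if they are not `j`'s worst current student, and unmatching `j`'s worst
current student otherwise. -/
def IsTStep (M : Market n m) (T : (Fin n → Option (Fin m)) → Fin n → Option (Fin m)) : Prop :=
  ∀ μ, M.IsMatching μ → M.OneEnvyFree μ →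
    ((∀ i j, ¬ M.Blocks μ i j) → T μ = μ) ∧
    ∀ i j, M.StudentMaxBlock μ i j →
      T μ i = some j ∧
      ∀ i', i' ≠ i →
        (μ i' ≠ some j → T μ i' = μ i') ∧
        (μ i' = some j →
          ((M.assigned μ j).card < M.quota j → T μ i' = μ i') ∧
          ((M.assigned μ j).card = M.quota j →
            ((∃ i'' ∈ M.assigned μ j, M.cPref j (some i') (some i'')) → T μ i' = μ i') ∧
            ((∀ i'' ∈ M.assigned μ j, i'' ≠ i' → M.cPref j (some i'') (some i')) →
              T μ i' = none)))

/-- `Tstar` iterates `T` finitely many times from any 1-envy-free matching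
until a fixed point of `T` is reached. -/
def IsTStarOf (M : Market n m) (T Tstar : (Fin n → Option (Fin m)) → Fin n → Option (Fin m)) :
    Prop :=
  ∀ μ, M.IsMatching μ → M.OneEnvyFree μ →
    ∃ r : ℕ, Tstar μ = T^[r] μ ∧ T (Tstar μ) = Tstar μ

/-- A one-step responsive improvement for college `j`: `A` is obtained from `B`
either by filling a vacancy with an acceptable student, or by swapping a
student of `B` for a strictly preferred outside student. -/
def SwapImproves (M : Market n m) (j : Fin m) (A B : Finset (Fin n)) : Prop :=
  (∃ i₁, i₁ ∉ B ∧ A = insert i₁ B ∧ M.cPref j (some i₁) none) ∨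
  (∃ i₁ i₂, i₂ ∈ B ∧ i₁ ∉ B ∧ A = insert i₁ (B.erase i₂) ∧ M.cPref j (some i₁) (some i₂))

/-- The responsive extension of college `j`'s strict preference to sets of
students: the transitive closure of one-step responsive improvements. -/
def SetPref (M : Market n m) (j : Fin m) (A B : Finset (Fin n)) : Prop :=
  Relation.TransGen (M.SwapImproves j) A B

/-- `μ₁ ≿ μ₂`: every college either gets the same set of students or a
strictly (responsively) preferred set. -/
def CollegesWeakPref (M : Market n m) (μ₁ μ₂ : Fin n → Option (Fin m)) : Prop :=
  ∀ j, M.assigned μ₁ j = M.assigned μ₂ j ∨ M.SetPref j (M.assigned μ₁ j) (M.assigned μ₂ j)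

/-- `μ` is the student-optimal stable matching: a stable matching that every
student weakly prefers to any other stable matching. -/
def IsSOSM (M : Market n m) (μ : Fin n → Option (Fin m)) : Prop :=
  M.IsMatching μ ∧ M.Stable μ ∧
    ∀ μ', M.IsMatching μ' → M.Stable μ' → ∀ i, M.sRank i (μ i) ≤ M.sRank i (μ' i)

/-- `μ` (with student `i` unmatched) is a stable matching of the market in
which student `i` has been removed. -/
def StableAway (M : Market n m) (i : Fin n) (μ : Fin n → Option (Fin m)) : Prop :=
  μ i = none ∧
  (∀ i', i' ≠ i → ¬ M.sPref i' none (μ i')) ∧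
  (∀ j i', i' ≠ i → μ i' = some j → ¬ M.cPref j none (some i')) ∧
  (∀ i' j, i' ≠ i → ¬ M.Blocks μ i' j)

/-- `μ` (with student `i` unmatched) is the student-optimal stable matching of
the market in which student `i` has been removed. -/
def IsSOSMAway (M : Market n m) (i : Fin n) (μ : Fin n → Option (Fin m)) : Prop :=
  M.IsMatching μ ∧ M.StableAway i μ ∧
    ∀ μ', M.IsMatching μ' → M.StableAway i μ' →
      ∀ i', i' ≠ i → M.sRank i' (μ i') ≤ M.sRank i' (μ' i')

/-- The maximum rank difference `h(w)` among the colleges' preferences: the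
largest rank gap `|w_j(i₁) − w_j(i₂)|` over colleges `j` and pairs `(i₁, i₂)`
on whose relative ranking at least two colleges disagree (`0` if there is no
disagreement). -/
def maxRankDiff (M : Market n m) : ℕ :=
  Finset.univ.sup fun j : Fin m =>
    (Finset.univ.filter fun q : Option (Fin n) × Option (Fin n) =>
        ∃ j₁ j₂ : Fin m, M.cPref j₁ q.1 q.2 ∧ M.cPref j₂ q.2 q.1).sup
      fun q => ((M.cRank j q.1 : ℤ) - (M.cRank j q.2 : ℤ)).natAbs

/-- `N*_{j,1}(μ) = μ⁻¹(j) \ μ*⁻¹(j)` : students of `j` under `μ` but not `μs`. -/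
def Nset1 (M : Market n m) (μ μs : Fin n → Option (Fin m)) (j : Fin m) : Finset (Fin n) :=
  M.assigned μ j \ M.assigned μs j

/-- `N*_{j,0}(μ) = μ*⁻¹(j) \ μ⁻¹(j)` : students of `j` under `μs` but not `μ`. -/
def Nset0 (M : Market n m) (μ μs : Fin n → Option (Fin m)) (j : Fin m) : Finset (Fin n) :=
  M.assigned μs j \ M.assigned μ j

/-- The rank `r_{j,i}(A)` of student `i` within the set `A` according to `≻_j`. -/
def rankIn (M : Market n m) (j : Fin m) (i : Fin n) (A : Finset (Fin n)) : ℕ :=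
  (A.filter fun i' => M.cPref j (some i') (some i)).card + 1

/-- `a ▷_j b`: student `a` displaces student `b` from college `j` (as we move
from the SOSM `μs` to the stable matching `μ`). -/
def Displaces (M : Market n m) (μ μs : Fin n → Option (Fin m)) (j : Fin m) (a b : Fin n) :
    Prop :=
  a ∈ M.Nset1 μ μs j ∧ b ∈ M.Nset0 μ μs j ∧
    M.rankIn j a (M.Nset1 μ μs j) = M.rankIn j b (M.Nset0 μ μs j)

/-- `a ▷ b`: `a` displaces `b` from some college. -/
def DisplacesAny (M : Market n m) (μ μs : Fin n → Option (Fin m)) (a b : Fin n) : Prop :=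
  ∃ j, M.Displaces μ μs j a b

/-- The positions of the related one-to-one market: college `j` is split into
`q_j` ordered positions. -/
abbrev Position (M : Market n m) : Type := (j : Fin m) × Fin (M.quota j)

/-- Student `i`'s strict preference over positions in the related one-to-one
market: positions of strictly better colleges are better, and within a college
a smaller index is better. -/
def PosBetter (M : Market n m) (i : Fin n) :
    Option (Position M) → Option (Position M) → Prop
  | some q, some q' =>
      M.sRank i (some q.1) < M.sRank i (some q'.1) ∨ (q.1 = q'.1 ∧ (q.2 : ℕ) < (q'.2 : ℕ))
  | some q, none => M.sRank i (some q.1) < M.sRank i none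
  | none, some q' => M.sRank i none < M.sRank i (some q'.1)
  | none, none => False

/-- `(μN, μM)` is the one-to-one matching of the related market corresponding
to the many-to-one matching `μ`: the students of `μ⁻¹(j)` occupy, in the order
of college `j`'s preference, the ordered positions of `j`. -/
def Corresponds (M : Market n m) (μ : Fin n → Option (Fin m))
    (μN : Fin n → Option (Position M)) (μM : Position M → Option (Fin n)) : Prop :=
  (∀ i p, μN i = some p ↔ μM p = some i) ∧
  (∀ i j, (∃ s, μN i = some ⟨j, s⟩) ↔ μ i = some j) ∧
  (∀ i j (s : Fin (M.quota j)), μN i = some ⟨j, s⟩ →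
    (s : ℕ) = ((M.assigned μ j).filter fun i' => M.cPref j (some i') (some i)).card)

/-- `(i, p)` is a blocking pair in the related one-to-one market. -/
def PosBlocks (M : Market n m) (μN : Fin n → Option (Position M))
    (μM : Position M → Option (Fin n)) (i : Fin n) (p : Position M) : Prop :=
  M.PosBetter i (some p) (μN i) ∧ M.cPref p.1 (some i) (μM p)

/-- Individual rationality in the related one-to-one market. -/
def PosIR (M : Market n m) (μN : Fin n → Option (Position M))
    (μM : Position M → Option (Fin n)) : Prop :=
  (∀ i, ¬ M.PosBetter i none (μN i)) ∧ (∀ p : Position M, ¬ M.cPref p.1 none (μM p))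

/-- Stability in the related one-to-one market. -/
def PosStable (M : Market n m) (μN : Fin n → Option (Position M))
    (μM : Position M → Option (Fin n)) : Prop :=
  M.PosIR μN μM ∧ ∀ i p, ¬ M.PosBlocks μN μM i p

/-- Simplicity in the related one-to-one market: individually rational and any
blocking pair involves an unmatched student. -/
def PosSimple (M : Market n m) (μN : Fin n → Option (Position M))
    (μM : Position M → Option (Fin n)) : Prop :=
  M.PosIR μN μM ∧ ∀ i p, M.PosBlocks μN μM i p → μN i = none

/-- 1-simplicity in the related one-to-one market: simple, and either stable or
there is one and only one student belonging to every blocking pair. -/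
def PosOneSimple (M : Market n m) (μN : Fin n → Option (Position M))
    (μM : Position M → Option (Fin n)) : Prop :=
  M.PosSimple μN μM ∧
    (M.PosStable μN μM ∨ ∃! i : Fin n, ∀ i' p, M.PosBlocks μN μM i' p → i' = i)

end Market

/-- A generic one-to-one matching market with `n` students and `p` positions,
with strict preferences encoded by injective rank functions. -/
structure OOMarket (n p : ℕ) where
  sRank : Fin n → Option (Fin p) → ℕ
  sRank_inj : ∀ i, Function.Injective (sRank i)
  pRank : Fin p → Option (Fin n) → ℕ
  pRank_inj : ∀ c, Function.Injective (pRank c)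

namespace OOMarket

variable {n p : ℕ}

/-- `(μN, μM)` is a one-to-one matching. -/
def IsOOMatching (O : OOMarket n p) (μN : Fin n → Option (Fin p))
    (μM : Fin p → Option (Fin n)) : Prop :=
  ∀ i c, μN i = some c ↔ μM c = some i

/-- `(i, c)` is a blocking pair for `(μN, μM)`. -/
def OOBlocks (O : OOMarket n p) (μN : Fin n → Option (Fin p))
    (μM : Fin p → Option (Fin n)) (i : Fin n) (c : Fin p) : Prop :=
  O.sRank i (some c) < O.sRank i (μN i) ∧ O.pRank c (some i) < O.pRank c (μM c)

/-- Individual rationality. -/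
def OOIR (O : OOMarket n p) (μN : Fin n → Option (Fin p))
    (μM : Fin p → Option (Fin n)) : Prop :=
  (∀ i, ¬ O.sRank i none < O.sRank i (μN i)) ∧ (∀ c, ¬ O.pRank c none < O.pRank c (μM c))

/-- Stability. -/
def OOStable (O : OOMarket n p) (μN : Fin n → Option (Fin p))
    (μM : Fin p → Option (Fin n)) : Prop :=
  O.OOIR μN μM ∧ ∀ i c, ¬ O.OOBlocks μN μM i c

/-- Simplicity: individually rational and every blocking pair involves an
unmatched student. -/
def OOSimple (O : OOMarket n p) (μN : Fin n → Option (Fin p))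
    (μM : Fin p → Option (Fin n)) : Prop :=
  O.OOIR μN μM ∧ ∀ i c, O.OOBlocks μN μM i c → μN i = none

/-- 1-simplicity: simple, and either stable or there is one and only one
student belonging to every blocking pair. -/
def OOOneSimple (O : OOMarket n p) (μN : Fin n → Option (Fin p))
    (μM : Fin p → Option (Fin n)) : Prop :=
  O.OOSimple μN μM ∧
    (O.OOStable μN μM ∨ ∃! i : Fin n, ∀ i' c, O.OOBlocks μN μM i' c → i' = i)

end OOMarket

end

section AuxProof

namespace Market

variable {n m : ℕ}

lemma mem_assigned_iff (M : Market n m) {μ : Fin n → Option (Fin m)} {j : Fin m} {i : Fin n} :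
    i ∈ M.assigned μ j ↔ μ i = some j := by
  simp [Market.assigned]


lemma filter_cpref (M : Market n m) (j : Fin m) (A : Finset (Fin n)) (a : Fin n) :
    (A.filter fun i' => M.cPref j (some i') (some a))
      = A.filter fun x => M.cRank j (some x) < M.cRank j (some a) := by
  apply Finset.filter_congr
  intro x _
  exact Iff.rfl

lemma rank_filter_lt (M : Market n m) (j : Fin m) (A : Finset (Fin n)) {a b : Fin n}
    (ha : a ∈ A) (h : M.cRank j (some a) < M.cRank j (some b)) :
    (A.filter fun x => M.cRank j (some x) < M.cRank j (some a)).card <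
      (A.filter fun x => M.cRank j (some x) < M.cRank j (some b)).card := by
  apply Finset.card_lt_card
  rw [Finset.ssubset_iff_of_subset]
  · exact ⟨a, Finset.mem_filter.mpr ⟨ha, h⟩, by simp⟩
  · intro x hx
    rw [Finset.mem_filter] at hx ⊢
    exact ⟨hx.1, hx.2.trans h⟩

lemma exists_rank_count (M : Market n m) (j : Fin m) (A : Finset (Fin n)) (s : ℕ)
    (hs : s < A.card) :
    ∃ i ∈ A, (A.filter fun x => M.cRank j (some x) < M.cRank j (some i)).card = s := by
  classical
  set f : Fin n → ℕ := fun i => (A.filter fun x => M.cRank j (some x) < M.cRank j (some i)).card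
    with hf
  have hlt : ∀ i ∈ A, f i < A.card := by
    intro i hi
    apply Finset.card_lt_card
    rw [Finset.ssubset_iff_of_subset (Finset.filter_subset _ _)]
    exact ⟨i, hi, by simp⟩
  have hinj : Set.InjOn f A := by
    intro a ha b hb hab
    by_contra hne
    have hsome : (some a : Option (Fin n)) ≠ some b := by simpa using hne
    have hr : M.cRank j (some a) ≠ M.cRank j (some b) := fun e => hsome (M.cRank_inj j e)
    rcases lt_or_gt_of_ne hr with h | h
    · exact absurd hab (Nat.ne_of_lt (M.rank_filter_lt j A ha h))
    · exact absurd hab.symm (Nat.ne_of_lt (M.rank_filter_lt j A hb h))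
  have himage : A.image f = Finset.range A.card := by
    apply Finset.eq_of_subset_of_card_le
    · intro x hx
      rcases Finset.mem_image.mp hx with ⟨i, hi, rfl⟩
      exact Finset.mem_range.mpr (hlt i hi)
    · rw [Finset.card_range, Finset.card_image_of_injOn hinj]
  have hsmem : s ∈ A.image f := by rw [himage]; exact Finset.mem_range.mpr hs
  rcases Finset.mem_image.mp hsmem with ⟨i, hi, hfi⟩
  exact ⟨i, hi, hfi⟩

lemma corr_some (M : Market n m) {μ : Fin n → Option (Fin m)}
    {μN : Fin n → Option M.Position} {μM : M.Position → Option (Fin n)}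
    (hc : M.Corresponds μ μN μM)
    {j : Fin m} {s : Fin (M.quota j)} {a : Fin n} (h : μM ⟨j, s⟩ = some a) :
    μ a = some j ∧
      ((M.assigned μ j).filter fun x => M.cRank j (some x) < M.cRank j (some a)).card
        = (s : ℕ) := by
  obtain ⟨hc1, hc2, hc3⟩ := hc
  have hN : μN a = some ⟨j, s⟩ := (hc1 a ⟨j, s⟩).mpr h
  refine ⟨(hc2 a j).mp ⟨s, hN⟩, ?_⟩
  have h3 := (hc3 a j s hN).symm
  rwa [M.filter_cpref] at h3

lemma corr_filled (M : Market n m) {μ : Fin n → Option (Fin m)}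
    {μN : Fin n → Option M.Position} {μM : M.Position → Option (Fin n)}
    (hc : M.Corresponds μ μN μM)
    (j : Fin m) (s : Fin (M.quota j)) (hs : (s : ℕ) < (M.assigned μ j).card) :
    ∃ a, μM ⟨j, s⟩ = some a := by
  obtain ⟨i, hi, hcount⟩ := M.exists_rank_count j (M.assigned μ j) s hs
  obtain ⟨hc1, hc2, hc3⟩ := hc
  have hμi : μ i = some j := M.mem_assigned_iff.mp hi
  obtain ⟨s', hs'⟩ := (hc2 i j).mpr hμi
  have hval : (s' : ℕ) = (s : ℕ) := by
    rw [hc3 i j s' hs', M.filter_cpref]; exact hcount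
  have hss : s' = s := Fin.ext hval
  subst hss
  exact ⟨i, (hc1 i ⟨j, s'⟩).mp hs'⟩

lemma corr_le_count (M : Market n m) {μ : Fin n → Option (Fin m)}
    {μN : Fin n → Option M.Position} {μM : M.Position → Option (Fin n)}
    (hc : M.Corresponds μ μN μM)
    {j : Fin m} {s : Fin (M.quota j)} {a : Fin n} (h : μM ⟨j, s⟩ = some a) :
    ((M.assigned μ j).filter fun x => M.cRank j (some x) ≤ M.cRank j (some a)).card
      = (s : ℕ) + 1 := by
  obtain ⟨hμa, hcount⟩ := M.corr_some hc h
  have ha : a ∈ M.assigned μ j := M.mem_assigned_iff.mpr hμa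
  have heq : (M.assigned μ j).filter (fun x => M.cRank j (some x) ≤ M.cRank j (some a))
      = insert a ((M.assigned μ j).filter fun x =>
          M.cRank j (some x) < M.cRank j (some a)) := by
    ext x
    simp only [Finset.mem_filter, Finset.mem_insert]
    constructor
    · rintro ⟨hx, hle⟩
      rcases lt_or_eq_of_le hle with h' | h'
      · exact Or.inr ⟨hx, h'⟩
      · exact Or.inl (Option.some_injective _ (M.cRank_inj j h'))
    · rintro (rfl | ⟨hx, hlt⟩)
      · exact ⟨ha, le_refl _⟩
      · exact ⟨hx, le_of_lt hlt⟩
  rw [heq, Finset.card_insert_of_notMem (by simp), hcount]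

lemma corr_pos_rank_le (M : Market n m) {μ : Fin n → Option (Fin m)}
    {μN : Fin n → Option M.Position} {μM : M.Position → Option (Fin n)}
    (hc : M.Corresponds μ μN μM)
    (j : Fin m) (s : Fin (M.quota j)) (t : ℕ)
    (h : (s : ℕ) + 1 ≤ ((M.assigned μ j).filter fun x => M.cRank j (some x) ≤ t).card) :
    ∃ a, μM ⟨j, s⟩ = some a ∧ M.cRank j (some a) ≤ t := by
  have hcard : (s : ℕ) < (M.assigned μ j).card :=
    lt_of_lt_of_le (Nat.lt_succ_self _)
      (h.trans (Finset.card_le_card (Finset.filter_subset _ _)))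
  obtain ⟨a, ha⟩ := M.corr_filled hc j s hcard
  refine ⟨a, ha, ?_⟩
  by_contra hgt
  push_neg at hgt
  have hsub : (M.assigned μ j).filter (fun x => M.cRank j (some x) ≤ t) ⊆
      (M.assigned μ j).filter fun x => M.cRank j (some x) < M.cRank j (some a) := by
    intro x hx; rw [Finset.mem_filter] at hx ⊢; exact ⟨hx.1, lt_of_le_of_lt hx.2 hgt⟩
  have hle := (Finset.card_le_card hsub).trans_eq (M.corr_some hc ha).2
  omega

lemma extraction (M : Market n m) {μ₁ μ₂ : Fin n → Option (Fin m)}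
    {μN₁ : Fin n → Option M.Position} {μM₁ : M.Position → Option (Fin n)}
    {μN₂ : Fin n → Option M.Position} {μM₂ : M.Position → Option (Fin n)}
    (hc₁ : M.Corresponds μ₁ μN₁ μM₁) (hc₂ : M.Corresponds μ₂ μN₂ μM₂)
    (j : Fin m) (s : Fin (M.quota j))
    (hcap₁ : (M.assigned μ₁ j).card ≤ M.quota j)
    (hIR₁ : ∀ i, μ₁ i = some j → M.cRank j (some i) < M.cRank j none)
    (hIR₂ : ∀ i, μ₂ i = some j → M.cRank j (some i) < M.cRank j none)
    (hlt : M.cRank j (μM₂ ⟨j, s⟩) < M.cRank j (μM₁ ⟨j, s⟩)) :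
    ∃ i₁, μ₂ i₁ = some j ∧ μ₁ i₁ ≠ some j ∧
      (((M.assigned μ₁ j).card < M.quota j ∧ M.cPref j (some i₁) none) ∨
       ((M.assigned μ₁ j).card = M.quota j ∧
         ∃ i'' ∈ M.assigned μ₁ j, M.cPref j (some i₁) (some i''))) := by
  obtain ⟨b, hb⟩ : ∃ b, μM₂ ⟨j, s⟩ = some b := by
    cases hb2 : μM₂ ⟨j, s⟩ with
    | some b => exact ⟨b, rfl⟩
    | none =>
      rw [hb2] at hlt
      cases ha1 : μM₁ ⟨j, s⟩ with
      | none => rw [ha1] at hlt; exact absurd hlt (lt_irrefl _)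
      | some a =>
        rw [ha1] at hlt
        exact absurd (hIR₁ a (M.corr_some hc₁ ha1).1) (not_lt.mpr hlt.le)
  rw [hb] at hlt
  obtain ⟨hμ₂b, -⟩ := M.corr_some hc₂ hb
  have hTb := M.corr_le_count hc₂ hb
  obtain ⟨i₁, hi₁T, hi₁A⟩ : ∃ i₁ ∈ (M.assigned μ₂ j).filter
      (fun x => M.cRank j (some x) ≤ M.cRank j (some b)), i₁ ∉ M.assigned μ₁ j := by
    by_contra hall
    push_neg at hall
    have hsub : (M.assigned μ₂ j).filter
        (fun x => M.cRank j (some x) ≤ M.cRank j (some b)) ⊆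
        (M.assigned μ₁ j).filter (fun x => M.cRank j (some x) ≤ M.cRank j (some b)) := by
      intro x hx
      have hx' := Finset.mem_filter.mp hx
      exact Finset.mem_filter.mpr ⟨hall x hx, hx'.2⟩
    have hge : (s : ℕ) + 1 ≤ ((M.assigned μ₁ j).filter
        (fun x => M.cRank j (some x) ≤ M.cRank j (some b))).card := by
      rw [← hTb]; exact Finset.card_le_card hsub
    obtain ⟨a, ha, hale⟩ := M.corr_pos_rank_le hc₁ j s _ hge
    rw [ha] at hlt
    exact absurd hlt (not_lt.mpr hale)
  rw [Finset.mem_filter] at hi₁T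
  obtain ⟨hi₁B, hi₁rank⟩ := hi₁T
  have hμ₂i₁ : μ₂ i₁ = some j := M.mem_assigned_iff.mp hi₁B
  have hμ₁i₁ : μ₁ i₁ ≠ some j := fun hcon => hi₁A (M.mem_assigned_iff.mpr hcon)
  refine ⟨i₁, hμ₂i₁, hμ₁i₁, ?_⟩
  rcases lt_or_eq_of_le hcap₁ with hfull | hfull
  · exact Or.inl ⟨hfull, lt_of_le_of_lt hi₁rank (hIR₂ b hμ₂b)⟩
  · refine Or.inr ⟨hfull, ?_⟩
    have hs' : (s : ℕ) < (M.assigned μ₁ j).card := by rw [hfull]; exact s.isLt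
    obtain ⟨a, ha⟩ := M.corr_filled hc₁ j s hs'
    rw [ha] at hlt
    exact ⟨a, M.mem_assigned_iff.mpr (M.corr_some hc₁ ha).1, lt_of_le_of_lt hi₁rank hlt⟩

/-- auxiliary predicate: college `jx` is full under `μ'` and all of its
`μ'`-students are strictly preferred to some `μ`-student `v` of `jx` who is
not a `μ'`-student of `jx`. -/
def Qvis (M : Market n m) (μ μ' : Fin n → Option (Fin m)) (jx : Fin m) : Prop :=
  ∃ v, μ v = some jx ∧ μ' v ≠ some jx ∧ (M.assigned μ' jx).card = M.quota jx ∧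
    ∀ y ∈ M.assigned μ' jx, M.cPref jx (some y) (some v)

lemma typeUp (M : Market n m) {μ μ' : Fin n → Option (Fin m)}
    (hμ' : M.IsMatching μ') (hst : M.Stable μ) (hef : M.EnvyFree μ')
    {b : Fin n} {jx : Fin m} (hb : μ' b = some jx) (hbA : μ b ≠ some jx)
    (hcol : ((M.assigned μ jx).card < M.quota jx ∧ M.cPref jx (some b) none) ∨
      ((M.assigned μ jx).card = M.quota jx ∧
        ∃ i'' ∈ M.assigned μ jx, M.cPref jx (some b) (some i''))) :
    ∃ jx₂, μ b = some jx₂ ∧ M.sPref b (some jx₂) (some jx) ∧ M.Qvis μ μ' jx₂ := by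
  have hnb := hst.2 b jx
  have hnpref : ¬ M.sPref b (some jx) (μ b) := fun hp => hnb ⟨hp, hcol⟩
  have hIRb : ¬ M.sPref b none (μ' b) := hef.1.1 b
  rw [hb] at hIRb
  cases hμb : μ b with
  | none =>
    rw [hμb] at hnpref
    have h1 : M.sRank b (some jx) ≤ M.sRank b none := not_lt.mp hIRb
    have h2 : M.sRank b none ≤ M.sRank b (some jx) := not_lt.mp hnpref
    have : (some jx : Option (Fin m)) = none := M.sRank_inj b (le_antisymm h1 h2)
    simp at this
  | some jx₂ =>
    rw [hμb] at hnpref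
    have hne : jx₂ ≠ jx := by rintro rfl; exact hbA hμb
    have hpref : M.sPref b (some jx₂) (some jx) := by
      have hle : M.sRank b (some jx₂) ≤ M.sRank b (some jx) := not_lt.mp hnpref
      exact lt_of_le_of_ne hle (fun e => hne (Option.some_injective _ (M.sRank_inj b e)))
    refine ⟨jx₂, rfl, hpref, ?_⟩
    have hnb' : ¬ M.Blocks μ' b jx₂ := fun hB => by
      have hnone := hef.2 b jx₂ hB
      rw [hb] at hnone
      exact Option.some_ne_none _ hnone
    have hspref' : M.sPref b (some jx₂) (μ' b) := by rw [hb]; exact hpref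
    have hcol' : ¬ (((M.assigned μ' jx₂).card < M.quota jx₂ ∧ M.cPref jx₂ (some b) none) ∨
        ((M.assigned μ' jx₂).card = M.quota jx₂ ∧
          ∃ i'' ∈ M.assigned μ' jx₂, M.cPref jx₂ (some b) (some i''))) :=
      fun hcc => hnb' ⟨hspref', hcc⟩
    have hacc : M.cPref jx₂ (some b) none := by
      have hir := hst.1.2 jx₂ b hμb
      have hle : M.cRank jx₂ (some b) ≤ M.cRank jx₂ none := not_lt.mp hir
      exact lt_of_le_of_ne hle (fun e => by simpa using M.cRank_inj jx₂ e)
    have hfull : (M.assigned μ' jx₂).card = M.quota jx₂ := by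
      rcases lt_or_eq_of_le (hμ' jx₂) with hq | hq
      · exact absurd (Or.inl ⟨hq, hacc⟩) hcol'
      · exact hq
    have hdom : ∀ y ∈ M.assigned μ' jx₂, M.cPref jx₂ (some y) (some b) := by
      intro y hy
      have hnot : ¬ M.cPref jx₂ (some b) (some y) :=
        fun hp => hcol' (Or.inr ⟨hfull, y, hy, hp⟩)
      have hyb : y ≠ b := by
        rintro rfl
        have hyj : μ' y = some jx₂ := M.mem_assigned_iff.mp hy
        rw [hb] at hyj
        exact hne (Option.some_injective _ hyj).symm
      have hle : M.cRank jx₂ (some y) ≤ M.cRank jx₂ (some b) := not_lt.mp hnot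
      exact lt_of_le_of_ne hle (fun e => hyb (Option.some_injective _ (M.cRank_inj jx₂ e)))
    exact ⟨b, hμb, by rw [hb]; exact fun e => hne (Option.some_injective _ e).symm,
      hfull, hdom⟩

lemma qvis_colside (M : Market n m) {μ μ' : Fin n → Option (Fin m)}
    (hμ : M.IsMatching μ) (hef : M.EnvyFree μ') {jx : Fin m} (hQ : M.Qvis μ μ' jx)
    {b : Fin n} (hb : μ' b = some jx) :
    ((M.assigned μ jx).card < M.quota jx ∧ M.cPref jx (some b) none) ∨
      ((M.assigned μ jx).card = M.quota jx ∧
        ∃ i'' ∈ M.assigned μ jx, M.cPref jx (some b) (some i'')) := by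
  obtain ⟨v, hvμ, hvμ', hcard, hdom⟩ := hQ
  have hbB : b ∈ M.assigned μ' jx := M.mem_assigned_iff.mpr hb
  have hacc : M.cPref jx (some b) none := by
    have hir := hef.1.2 jx b hb
    have hle : M.cRank jx (some b) ≤ M.cRank jx none := not_lt.mp hir
    exact lt_of_le_of_ne hle (fun e => by simpa using M.cRank_inj jx e)
  rcases lt_or_eq_of_le (hμ jx) with hq | hq
  · exact Or.inl ⟨hq, hacc⟩
  · exact Or.inr ⟨hq, v, M.mem_assigned_iff.mpr hvμ, hdom b hbB⟩

lemma qvis_closed (M : Market n m) {μ μ' : Fin n → Option (Fin m)}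
    (hμ : M.IsMatching μ) (hμ' : M.IsMatching μ') (hst : M.Stable μ) (hef : M.EnvyFree μ') :
    ∀ x jx, M.Qvis μ μ' jx → μ' x = some jx → ∃ jx₂, M.Qvis μ μ' jx₂ ∧ μ x = some jx₂ := by
  intro x jx hQ hx
  by_cases hxe : μ x = some jx
  · exact ⟨jx, hQ, hxe⟩
  · obtain ⟨jx₂, h1, -, h3⟩ := M.typeUp hμ' hst hef hx hxe (M.qvis_colside hμ hef hQ hx)
    exact ⟨jx₂, h3, h1⟩

lemma qvis_inv (M : Market n m) {μ μ' : Fin n → Option (Fin m)}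
    (hμ : M.IsMatching μ) (hμ' : M.IsMatching μ') (hst : M.Stable μ) (hef : M.EnvyFree μ') :
    ∀ x jx, M.Qvis μ μ' jx → μ x = some jx → ∃ jx', M.Qvis μ μ' jx' ∧ μ' x = some jx' := by
  classical
  set W : Finset (Fin m) := Finset.univ.filter (M.Qvis μ μ') with hW
  set Z : Finset (Fin n) := Finset.univ.filter (fun x => ∃ jx ∈ W, μ x = some jx) with hZ
  set Z' : Finset (Fin n) := Finset.univ.filter (fun x => ∃ jx ∈ W, μ' x = some jx) with hZ'
  have hmemW : ∀ jx, jx ∈ W ↔ M.Qvis μ μ' jx := by intro jx; simp [hW]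
  have hsub : Z' ⊆ Z := by
    intro x hx
    rw [hZ', Finset.mem_filter] at hx
    obtain ⟨-, jx, hjx, hx'⟩ := hx
    obtain ⟨jx₂, hQ₂, hμx⟩ := M.qvis_closed hμ hμ' hst hef x jx ((hmemW jx).mp hjx) hx'
    rw [hZ, Finset.mem_filter]
    exact ⟨Finset.mem_univ x, jx₂, (hmemW jx₂).mpr hQ₂, hμx⟩
  have hZbi : Z = W.biUnion (fun jx => M.assigned μ jx) := by
    ext x
    simp [hZ, Finset.mem_biUnion, Market.assigned]
  have hZbi' : Z' = W.biUnion (fun jx => M.assigned μ' jx) := by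
    ext x
    simp [hZ', Finset.mem_biUnion, Market.assigned]
  have hdisj : ∀ (ν : Fin n → Option (Fin m)), ∀ a ∈ W, ∀ b ∈ W, a ≠ b →
      Disjoint (M.assigned ν a) (M.assigned ν b) := by
    intro ν a _ b _ hab
    apply Finset.disjoint_left.mpr
    intro x hxa hxb
    rw [M.mem_assigned_iff] at hxa hxb
    exact hab (Option.some_injective _ (hxa.symm.trans hxb))
  have hcardZ : Z.card = ∑ jx ∈ W, (M.assigned μ jx).card := by
    rw [hZbi]; exact Finset.card_biUnion (hdisj μ)
  have hcardZ' : Z'.card = ∑ jx ∈ W, (M.assigned μ' jx).card := by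
    rw [hZbi']; exact Finset.card_biUnion (hdisj μ')
  have hle : Z.card ≤ Z'.card := by
    rw [hcardZ, hcardZ']
    apply Finset.sum_le_sum
    intro jx hjx
    obtain ⟨v, -, -, hcard, -⟩ := (hmemW jx).mp hjx
    rw [hcard]; exact hμ jx
  have hZeq : Z' = Z := Finset.eq_of_subset_of_card_le hsub hle
  intro x jx hQ hx
  have hxZ : x ∈ Z := by
    rw [hZ, Finset.mem_filter]
    exact ⟨Finset.mem_univ x, jx, (hmemW jx).mpr hQ, hx⟩
  rw [← hZeq, hZ', Finset.mem_filter] at hxZ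
  obtain ⟨-, jx', hjx', hx'⟩ := hxZ
  exact ⟨jx', (hmemW jx').mp hjx', hx'⟩

end Market

end AuxProof


/-- comparing the related one-to-one matchings of a stable
matching `μ` and a 1-envy-free matching `μ'`: if some position `c` of college
`j` is filled by a strictly `j`-better student under `μ̄` than under `μ̄'`,
then every position `c'` of `j` is filled by a weakly `j`-better student under
`μ̄` than under `μ̄'`. -/
theorem positionwise_comparison {n m : ℕ} (M : Market n m)
    (μ μ' : Fin n → Option (Fin m))
    (μN : Fin n → Option (Market.Position M)) (μM : Market.Position M → Option (Fin n))
    (μN' : Fin n → Option (Market.Position M)) (μM' : Market.Position M → Option (Fin n))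
    (hμ : M.IsMatching μ) (hst : M.Stable μ)
    (hμ' : M.IsMatching μ') (h1 : M.OneEnvyFree μ')
    (hc : M.Corresponds μ μN μM) (hc' : M.Corresponds μ' μN' μM')
    (j : Fin m) (c : Fin (M.quota j))
    (h : M.cPref j (μM ⟨j, c⟩) (μM' ⟨j, c⟩)) :
    ∀ c' : Fin (M.quota j), M.cRank j (μM ⟨j, c'⟩) ≤ M.cRank j (μM' ⟨j, c'⟩) := by
  intro c'
  by_contra hcon
  rw [not_le] at hcon
  have hef : M.EnvyFree μ' := h1.1
  have hIRμc : ∀ i, μ i = some j → M.cRank j (some i) < M.cRank j none := by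
    intro i hi
    have hir := hst.1.2 j i hi
    exact lt_of_le_of_ne (not_lt.mp hir) (fun e => by simpa using M.cRank_inj j e)
  have hIRμ'c : ∀ i, μ' i = some j → M.cRank j (some i) < M.cRank j none := by
    intro i hi
    have hir := hef.1.2 j i hi
    exact lt_of_le_of_ne (not_lt.mp hir) (fun e => by simpa using M.cRank_inj j e)
  -- Q side: extraction at position c'
  obtain ⟨i₁, hi₁μ', hi₁μ, hcol₁⟩ := M.extraction hc hc' j c' (hμ j) hIRμc hIRμ'c hcon
  obtain ⟨j₂, hj₂, -, hQvis₂⟩ := M.typeUp hμ' hst hef hi₁μ' hi₁μ hcol₁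
  -- the starting college j is itself a Qvis college
  obtain ⟨jx, hQjx, hμ'i₁⟩ := M.qvis_inv hμ hμ' hst hef i₁ j₂ hQvis₂ hj₂
  have hjxj : jx = j := Option.some_injective _ (hμ'i₁.symm.trans hi₁μ')
  have hQj : M.Qvis μ μ' j := hjxj ▸ hQjx
  -- P side: extraction at position c
  have hP : M.cRank j (μM ⟨j, c⟩) < M.cRank j (μM' ⟨j, c⟩) := h
  obtain ⟨i₀, hi₀μ, hi₀μ', hcol₀⟩ := M.extraction hc' hc j c (hμ' j) hIRμ'c hIRμc hP
  -- i₀ is matched under μ' to some other Qvis college jx'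
  obtain ⟨jx', hQjx', hμ'i₀⟩ := M.qvis_inv hμ hμ' hst hef i₀ j hQj hi₀μ
  have hne : jx' ≠ j := fun e => hi₀μ' (e ▸ hμ'i₀)
  have hμi₀ne : μ i₀ ≠ some jx' := by
    rw [hi₀μ]; exact fun e => hne (Option.some_injective _ e).symm
  obtain ⟨j₃, hj₃, hpref₃, -⟩ :=
    M.typeUp hμ' hst hef hμ'i₀ hμi₀ne (M.qvis_colside hμ hef hQjx' hμ'i₀)
  have hj₃j : j₃ = j := Option.some_injective _ (hj₃.symm.trans hi₀μ)
  rw [hj₃j] at hpref₃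
  -- (i₀, j) blocks μ' while i₀ is matched under μ' : contradiction
  have hblocks : M.Blocks μ' i₀ j := by
    refine ⟨?_, hcol₀⟩
    rw [hμ'i₀]
    exact hpref₃
  have hnone := hef.2 i₀ j hblocks
  rw [hμ'i₀] at hnone
  exact Option.some_ne_none _ hnone
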